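/- Let μ be a probability measure on {0,1}×{0,1}×{0,1} with coordinate random variables X, Y, Z, and suppose μ has full support, i.e. μ(X=i, Y=j, Z=k) > 0 for all i,j,k ∈ {0,1}. If X⊥Y, X⊥Y|Z, X⊥Z|Y and Y⊥Z|X all hold, then X, Y, Z are mutually independent; in particular X⊥Z and Y⊥Z also hold. -/

import Mathlib

open MeasureTheory

/-- The sample space `{0,1} × {0,1} × {0,1}`. -/
abbrev Omega3 : Type := Fin 2 × Fin 2 × Fin 2

noncomputable section

/-- marginal `μ(X = i)` -/
def pX (μ : Measure Omega3) (i : Fin 2) : ENNReal := μ {ω | ω.1 = i}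
/-- marginal `μ(Y = j)` -/
def pY (μ : Measure Omega3) (j : Fin 2) : ENNReal := μ {ω | ω.2.1 = j}
/-- marginal `μ(Z = k)` -/
def pZ (μ : Measure Omega3) (k : Fin 2) : ENNReal := μ {ω | ω.2.2 = k}
/-- `μ(X = i, Y = j)` -/
def pXY (μ : Measure Omega3) (i j : Fin 2) : ENNReal := μ {ω | ω.1 = i ∧ ω.2.1 = j}
/-- `μ(X = i, Z = k)` -/
def pXZ (μ : Measure Omega3) (i k : Fin 2) : ENNReal := μ {ω | ω.1 = i ∧ ω.2.2 = k}
/-- `μ(Y = j, Z = k)` -/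
def pYZ (μ : Measure Omega3) (j k : Fin 2) : ENNReal := μ {ω | ω.2.1 = j ∧ ω.2.2 = k}
/-- `μ(X = i, Y = j, Z = k)` -/
def pXYZ (μ : Measure Omega3) (i j k : Fin 2) : ENNReal :=
  μ {ω | ω.1 = i ∧ ω.2.1 = j ∧ ω.2.2 = k}

/-- `X ⊥ Y` -/
def IndXY (μ : Measure Omega3) : Prop := ∀ i j, pXY μ i j = pX μ i * pY μ j
/-- `X ⊥ Z` -/
def IndXZ (μ : Measure Omega3) : Prop := ∀ i k, pXZ μ i k = pX μ i * pZ μ k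
/-- `Y ⊥ Z` -/
def IndYZ (μ : Measure Omega3) : Prop := ∀ j k, pYZ μ j k = pY μ j * pZ μ k
/-- `X ⊥ Y | Z` -/
def CondXY_Z (μ : Measure Omega3) : Prop :=
  ∀ i j k, pXYZ μ i j k * pZ μ k = pXZ μ i k * pYZ μ j k
/-- `X ⊥ Z | Y` -/
def CondXZ_Y (μ : Measure Omega3) : Prop :=
  ∀ i j k, pXYZ μ i j k * pY μ j = pXY μ i j * pYZ μ j k
/-- `Y ⊥ Z | X` -/
def CondYZ_X (μ : Measure Omega3) : Prop :=
  ∀ i j k, pXYZ μ i j k * pX μ i = pXY μ i j * pXZ μ i k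
/-- `X ⊥ Y ⊥ Z` (mutual independence) -/
def MutualIndep (μ : Measure Omega3) : Prop :=
  ∀ i j k, pXYZ μ i j k = pX μ i * pY μ j * pZ μ k
/-- `X ⊥ (Y, Z)` (joint independence of `X` from the pair) -/
def JointX_YZ (μ : Measure Omega3) : Prop :=
  ∀ i j k, pXYZ μ i j k = pX μ i * pYZ μ j k
/-- `Y ⊥ (X, Z)` -/
def JointY_XZ (μ : Measure Omega3) : Prop :=
  ∀ i j k, pXYZ μ i j k = pY μ j * pXZ μ i k
/-- `Z ⊥ (X, Y)` -/
def JointZ_XY (μ : Measure Omega3) : Prop :=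
  ∀ i j k, pXYZ μ i j k = pZ μ k * pXY μ i j
/-- `μ` has full support on the eight atoms. -/
def FullSupport (μ : Measure Omega3) : Prop := ∀ i j k, 0 < pXYZ μ i j k

theorem stmt_10 (μ : Measure Omega3) [IsProbabilityMeasure μ]
    (hfs : FullSupport μ)
    (h1 : IndXY μ) (h2 : CondXY_Z μ) (h3 : CondXZ_Y μ) (h4 : CondYZ_X μ) :
    MutualIndep μ ∧ IndXZ μ ∧ IndYZ μ := by
  -- positivity and finiteness of marginals
  have hXpos : ∀ i, pX μ i ≠ 0 := fun i => by
    have h := hfs i 0 0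
    have hle : pXYZ μ i 0 0 ≤ pX μ i := measure_mono (fun ω hω => hω.1)
    exact fun h0 => absurd (le_antisymm (h0 ▸ hle) zero_le) (ne_of_gt h)
  have hYpos : ∀ j, pY μ j ≠ 0 := fun j => by
    have h := hfs 0 j 0
    have hle : pXYZ μ 0 j 0 ≤ pY μ j := measure_mono (fun ω hω => hω.2.1)
    exact fun h0 => absurd (le_antisymm (h0 ▸ hle) zero_le) (ne_of_gt h)
  have hXfin : ∀ i, pX μ i ≠ ⊤ := fun i => measure_ne_top μ _
  have hYfin : ∀ j, pY μ j ≠ ⊤ := fun j => measure_ne_top μ _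
  -- marginal decompositions
  have hsplit : ∀ (s t : Set Omega3) (u : Set Omega3), u = s ∪ t → Disjoint s t →
      μ u = μ s + μ t := by
    intro s t u hu hd
    rw [hu, measure_union hd ((Set.toFinite t).measurableSet)]
  have hpXZ : ∀ i k, pXZ μ i k = pXYZ μ i 0 k + pXYZ μ i 1 k := by
    intro i k
    refine hsplit _ _ _ ?_ ?_
    · ext ⟨x, y, z⟩
      constructor
      · rintro ⟨rfl, rfl⟩
        fin_cases y <;> simp
      · rintro (⟨rfl, _, rfl⟩ | ⟨rfl, _, rfl⟩) <;> exact ⟨rfl, rfl⟩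
    · rw [Set.disjoint_left]
      rintro ⟨x, y, z⟩ ⟨_, h0, _⟩ ⟨_, h1, _⟩
      simp_all
  have hpZ : ∀ k, pZ μ k = pYZ μ 0 k + pYZ μ 1 k := by
    intro k
    refine hsplit _ _ _ ?_ ?_
    · ext ⟨x, y, z⟩
      constructor
      · rintro rfl
        fin_cases y <;> simp
      · rintro (⟨_, rfl⟩ | ⟨_, rfl⟩) <;> rfl
    · rw [Set.disjoint_left]
      rintro ⟨x, y, z⟩ ⟨h0, _⟩ ⟨h1, _⟩
      simp_all
  -- Step 1: X ⊥ (Y,Z)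
  have hJ : ∀ i j k, pXYZ μ i j k = pX μ i * pYZ μ j k := by
    intro i j k
    have h := h3 i j k
    rw [h1 i j] at h
    have : pXYZ μ i j k * pY μ j = (pX μ i * pYZ μ j k) * pY μ j := by
      rw [h]; ring
    exact (ENNReal.mul_left_inj (hYpos j) (hYfin j)).mp this
  -- Step 2: X ⊥ Z
  have hIXZ : IndXZ μ := by
    intro i k
    rw [hpXZ i k, hJ i 0 k, hJ i 1 k, hpZ k, mul_add]
  -- Step 3: Y ⊥ Z
  have hIYZ : IndYZ μ := by
    intro j k
    have h := h4 0 j k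
    rw [h1 0 j, hIXZ 0 k, hJ 0 j k] at h
    have h' : (pX μ 0 * pYZ μ j k) * pX μ 0 = (pX μ 0 * (pY μ j * pZ μ k)) * pX μ 0 := by
      rw [h]; ring
    exact (ENNReal.mul_right_inj (hXpos 0) (hXfin 0)).mp
      ((ENNReal.mul_left_inj (hXpos 0) (hXfin 0)).mp h')
  refine ⟨fun i j k => ?_, hIXZ, hIYZ⟩
  rw [hJ i j k, hIYZ j k, mul_assoc]
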